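/- Let φ : ℝ → ℝ be the Gaussian φ(x) = exp(−x²) and let δ > 0. Then there exist C > 0 and m₀ ∈ ℕ such that for all m ≥ m₀: (3m/δ)^{2m} ≥ C · m^{−1/2} · (3e/(2δ))^{2m} · max_{0 ≤ p ≤ 2m} sup_{b ∈ ℝ} |φ^{(p)}(b)|. In particular, if 0 < δ < 3e/2, the quantity (3m/δ)^{2m} / max_{0 ≤ p ≤ 2m} sup_{b ∈ ℝ} |φ^{(p)}(b)| grows at least exponentially in m. -/

import Mathlib

/-- The maximum over `0 ≤ p ≤ 2m` of the supremum over `b ∈ ℝ` of `|φ^{(p)}(b)|`. -/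
noncomputable def maxDerivSup (φ : ℝ → ℝ) (m : ℕ) : ℝ :=
  (Finset.range (2 * m + 1)).sup' Finset.nonempty_range_add_one fun p =>
    ⨆ b : ℝ, |iteratedDeriv p φ b|

open Polynomial Finset


noncomputable def gaussPoly : ℕ → Polynomial ℝ
  | 0 => 1
  | n + 1 => derivative (gaussPoly n) - Polynomial.C 2 * (Polynomial.X * gaussPoly n)

lemma gaussPoly_natDegree_le (n : ℕ) : (gaussPoly n).natDegree ≤ n := by
  induction n with
  | zero => simp [gaussPoly]
  | succ n ih =>
    rw [show gaussPoly (n+1) = derivative (gaussPoly n) - Polynomial.C 2 * (Polynomial.X * gaussPoly n) from rfl]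
    refine le_trans (natDegree_sub_le _ _) ?_
    rw [max_le_iff]
    have hd : (derivative (gaussPoly n)).natDegree ≤ n := by
      have := natDegree_derivative_le (gaussPoly n); omega
    refine ⟨hd.trans (by omega), ?_⟩
    have h1 : (Polynomial.X * gaussPoly n).natDegree ≤ 1 + n :=
      le_trans (natDegree_mul_le (p := Polynomial.X) (q := gaussPoly n)) (by simpa using Nat.add_le_add (natDegree_X_le (R := ℝ)) ih)
    exact le_trans (natDegree_C_mul_le _ _) (h1.trans (by omega))

lemma iteratedDeriv_gauss (n : ℕ) :
    iteratedDeriv n (fun t : ℝ => Real.exp (-t ^ 2)) =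
      fun x => (gaussPoly n).eval x * Real.exp (-x ^ 2) := by
  induction n with
  | zero => simp [gaussPoly]
  | succ n ih =>
    rw [iteratedDeriv_succ, ih]
    funext x
    have he : HasDerivAt (fun x : ℝ => Real.exp (-x ^ 2)) (-(2*x) * Real.exp (-x^2)) x := by
      have h2 : HasDerivAt (fun x : ℝ => -x ^ 2) (-(2*x)) x := by
        exact (by simpa using (hasDerivAt_pow 2 x).neg : HasDerivAt (-fun x : ℝ => x ^ 2) (-(2*x)) x)
      simpa [mul_comm] using h2.exp
    have h1 := ((gaussPoly n).hasDerivAt x).mul he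
    rw [show (fun x => eval x (gaussPoly n) * Real.exp (-x ^ 2)) = ((fun x => eval x (gaussPoly n)) * fun x => Real.exp (-x ^ 2)) from rfl, h1.deriv]
    rw [show gaussPoly (n+1) = derivative (gaussPoly n) - Polynomial.C 2 * (Polynomial.X * gaussPoly n) from rfl]
    simp only [eval_sub, eval_mul, eval_C, eval_X]
    ring

lemma pow_mul_exp_le (k : ℕ) (w t : ℝ) (hw : 1 ≤ w) (ht : 0 ≤ t) (hk : (k:ℝ) ≤ w^2) :
    t ^ k * Real.exp (-t ^ 2) ≤ w ^ k := by
  have hw0 : (0:ℝ) < w := lt_of_lt_of_le zero_lt_one hw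
  rcases le_or_gt t w with h | h
  · have := mul_le_mul (pow_le_pow_left₀ ht h k) (Real.exp_le_one_iff.mpr (show -t^2 ≤ 0 by nlinarith)) (Real.exp_nonneg _) (pow_nonneg hw0.le _)
    simpa using this
  · have ht0 : 0 < t := lt_trans hw0 h
    have hd0 : 0 < t / w := div_pos ht0 hw0
    have hd1 : 1 ≤ t / w := (le_div_iff₀ hw0).mpr (by linarith)
    have hlog : 0 ≤ Real.log (t / w) := Real.log_nonneg hd1
    have key : (t / w) ^ k ≤ Real.exp (t ^ 2) := by
      have h1 : (k:ℝ) * Real.log (t/w) ≤ w^2 * Real.log (t/w) :=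
        mul_le_mul_of_nonneg_right hk hlog
      have h2 : Real.log (t/w) ≤ t/w - 1 := Real.log_le_sub_one_of_pos hd0
      have h3 : w^2 * Real.log (t/w) ≤ w^2 * (t/w - 1) :=
        mul_le_mul_of_nonneg_left h2 (sq_nonneg w)
      have h4 : w^2 * (t/w - 1) = w*t - w^2 := by field_simp
      have h5 : w*t - w^2 ≤ t^2 := by nlinarith
      calc (t/w)^k = Real.exp ((k:ℝ) * Real.log (t/w)) := by
            rw [← Real.log_pow, Real.exp_log (pow_pos hd0 k)]
        _ ≤ Real.exp (t^2) := Real.exp_le_exp.mpr (by linarith)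
    have hsplit : t ^ k = w ^ k * (t/w) ^ k := by
      rw [div_pow]; field_simp
    calc t ^ k * Real.exp (-t^2) = w ^ k * ((t/w)^k * Real.exp (-t^2)) := by
          rw [hsplit]; ring
      _ ≤ w ^ k * (Real.exp (t^2) * Real.exp (-t^2)) := by
          apply mul_le_mul_of_nonneg_left
            (mul_le_mul_of_nonneg_right key (Real.exp_nonneg _)) (pow_nonneg hw0.le _)
      _ = w ^ k := by rw [← Real.exp_add]; simp

lemma gaussPoly_wsum_le (w : ℝ) (hw : 1 ≤ w) :
    ∀ p : ℕ, (p : ℝ) ≤ w ^ 2 →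
      ∑ k ∈ Finset.range (p+1), |(gaussPoly p).coeff k| * w ^ k ≤ (3*w) ^ p := by
  have hw0 : (0:ℝ) < w := lt_of_lt_of_le zero_lt_one hw
  intro p
  induction p with
  | zero => intro _; simp [gaussPoly]
  | succ p ih =>
    intro hp
    have hp' : (p : ℝ) ≤ w ^ 2 := le_trans (by exact_mod_cast Nat.cast_le.mpr (Nat.le_succ p)) hp
    have IH := ih hp'
    set Q := gaussPoly p with hQ
    have hdeg : Q.natDegree ≤ p := gaussPoly_natDegree_le p
    have hcz : ∀ j, p < j → Q.coeff j = 0 := fun j hj =>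
      coeff_eq_zero_of_natDegree_lt (lt_of_le_of_lt hdeg hj)
    set S := ∑ k ∈ Finset.range (p+1), |Q.coeff k| * w ^ k with hS
    have hS0 : 0 ≤ S := Finset.sum_nonneg fun k _ =>
      mul_nonneg (abs_nonneg _) (pow_nonneg hw0.le _)
    -- coefficient splitting
    have hsucc : gaussPoly (p+1) = derivative Q - Polynomial.C 2 * (Polynomial.X * Q) := rfl
    have step1 : ∑ k ∈ Finset.range (p+2), |(gaussPoly (p+1)).coeff k| * w ^ k ≤
        (∑ k ∈ Finset.range (p+2), |(derivative Q).coeff k| * w ^ k) +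
        2 * ∑ k ∈ Finset.range (p+2), |(Polynomial.X * Q).coeff k| * w ^ k := by
      rw [Finset.mul_sum, ← Finset.sum_add_distrib]
      apply Finset.sum_le_sum
      intro k _
      have : |(gaussPoly (p+1)).coeff k| ≤ |(derivative Q).coeff k| + 2 * |(Polynomial.X * Q).coeff k| := by
        rw [hsucc, coeff_sub, coeff_C_mul]
        calc |(derivative Q).coeff k - 2 * (Polynomial.X * Q).coeff k|
            ≤ |(derivative Q).coeff k| + |2 * (Polynomial.X * Q).coeff k| := abs_sub _ _
          _ = |(derivative Q).coeff k| + 2 * |(Polynomial.X * Q).coeff k| := by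
              rw [abs_mul]; norm_num
      refine le_trans (mul_le_mul_of_nonneg_right this (pow_nonneg hw0.le _)) (le_of_eq ?_)
      ring
    -- derivative part
    have T1 : ∑ k ∈ Finset.range (p+2), |(derivative Q).coeff k| * w ^ k ≤ w * S := by
      have term : ∀ k, |(derivative Q).coeff k| * w ^ k ≤ w * (|Q.coeff (k+1)| * w ^ (k+1)) := by
        intro k
        rw [coeff_derivative]
        by_cases hc : Q.coeff (k+1) = 0
        · simp [hc]
        · have hk1 : k + 1 ≤ p := by
            by_contra hcon
            exact hc (hcz _ (by omega))
          have hk1' : ((k:ℝ) + 1) ≤ w ^ 2 := le_trans (by exact_mod_cast hk1) hp'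
          have : |Q.coeff (k+1) * ((k:ℝ)+1)| = |Q.coeff (k+1)| * ((k:ℝ)+1) := by
            rw [abs_mul, abs_of_nonneg (by positivity : (0:ℝ) ≤ (k:ℝ)+1)]
          rw [show ((k:ℕ)+1 : ℝ) = ((k:ℝ)+1) by push_cast; ring] at *
          rw [this]
          have : |Q.coeff (k+1)| * ((k:ℝ)+1) * w ^ k ≤ |Q.coeff (k+1)| * w^2 * w ^ k := by
            apply mul_le_mul_of_nonneg_right _ (pow_nonneg hw0.le _)
            exact mul_le_mul_of_nonneg_left hk1' (abs_nonneg _)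
          calc |Q.coeff (k+1)| * ((k:ℝ)+1) * w ^ k ≤ |Q.coeff (k+1)| * w^2 * w ^ k := this
            _ = w * (|Q.coeff (k+1)| * w ^ (k+1)) := by ring
      calc ∑ k ∈ Finset.range (p+2), |(derivative Q).coeff k| * w ^ k
          ≤ ∑ k ∈ Finset.range (p+2), w * (|Q.coeff (k+1)| * w ^ (k+1)) :=
            Finset.sum_le_sum fun k _ => term k
        _ = w * ∑ k ∈ Finset.range (p+2), |Q.coeff (k+1)| * w ^ (k+1) := by
            rw [Finset.mul_sum]
        _ ≤ w * S := by
            apply mul_le_mul_of_nonneg_left _ hw0.le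
            have hU : ∑ k ∈ Finset.range (p+3), |Q.coeff k| * w ^ k =
                (∑ k ∈ Finset.range (p+2), |Q.coeff (k+1)| * w ^ (k+1)) + |Q.coeff 0| * w ^ 0 :=
              Finset.sum_range_succ' _ _
            have hT : ∑ k ∈ Finset.range (p+3), |Q.coeff k| * w ^ k = S := by
              rw [show p+3 = (p+1)+1+1 by ring]
              rw [Finset.sum_range_succ, Finset.sum_range_succ, hcz (p+1) (by omega), hcz (p+2) (by omega)]
              simp [hS]
            have h0 : 0 ≤ |Q.coeff 0| * w ^ 0 := mul_nonneg (abs_nonneg _) (pow_nonneg hw0.le _)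
            linarith [hU, hT]
    -- X-multiplication part
    have T2 : ∑ k ∈ Finset.range (p+2), |(Polynomial.X * Q).coeff k| * w ^ k = w * S := by
      have := Finset.sum_range_succ' (fun k => |(Polynomial.X * Q).coeff k| * w ^ k) (p+1)
      rw [this]
      have h0 : (Polynomial.X * Q).coeff 0 = 0 := by
        simp [Polynomial.mul_coeff_zero]
      rw [h0]
      simp only [coeff_X_mul]
      rw [hS, Finset.mul_sum]
      rw [abs_zero, zero_mul, add_zero]
      congr 1
      ext k
      ring
    calc ∑ k ∈ Finset.range (p+2), |(gaussPoly (p+1)).coeff k| * w ^ k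
        ≤ w * S + 2 * (w * S) := by
          rw [T2] at step1
          exact le_trans step1 (add_le_add_left T1 _)
      _ = 3 * w * S := by ring
      _ ≤ 3 * w * (3*w)^p := by
          apply mul_le_mul_of_nonneg_left IH (by positivity)
      _ = (3*w)^(p+1) := by ring

lemma iteratedDeriv_gauss_bound (w : ℝ) (hw : 1 ≤ w) (p : ℕ) (hp : (p:ℝ) ≤ w^2) (x : ℝ) :
    |iteratedDeriv p (fun t : ℝ => Real.exp (-t ^ 2)) x| ≤ (3*w)^p := by
  have hw0 : (0:ℝ) < w := lt_of_lt_of_le zero_lt_one hw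
  rw [iteratedDeriv_gauss]
  simp only
  have hdeg : (gaussPoly p).natDegree < p + 1 := Nat.lt_succ_of_le (gaussPoly_natDegree_le p)
  rw [Polynomial.eval_eq_sum_range' hdeg]
  have hE : (0:ℝ) < Real.exp (-x^2) := Real.exp_pos _
  calc |(∑ k ∈ Finset.range (p+1), (gaussPoly p).coeff k * x ^ k) * Real.exp (-x^2)|
      = |∑ k ∈ Finset.range (p+1), (gaussPoly p).coeff k * x ^ k| * Real.exp (-x^2) := by
        rw [abs_mul, abs_of_pos hE]
    _ ≤ (∑ k ∈ Finset.range (p+1), |(gaussPoly p).coeff k| * |x| ^ k) * Real.exp (-x^2) := by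
        apply mul_le_mul_of_nonneg_right _ hE.le
        refine le_trans (Finset.abs_sum_le_sum_abs _ _) (le_of_eq ?_)
        apply Finset.sum_congr rfl
        intro k _
        rw [abs_mul, abs_pow]
    _ = ∑ k ∈ Finset.range (p+1), |(gaussPoly p).coeff k| * (|x| ^ k * Real.exp (-x^2)) := by
        rw [Finset.sum_mul]; apply Finset.sum_congr rfl; intro k _; ring
    _ ≤ ∑ k ∈ Finset.range (p+1), |(gaussPoly p).coeff k| * w ^ k := by
        apply Finset.sum_le_sum
        intro k hk
        apply mul_le_mul_of_nonneg_left _ (abs_nonneg _)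
        have hk' : (k:ℝ) ≤ w^2 := by
          have : k ≤ p := by simpa using Nat.lt_succ_iff.mp (Finset.mem_range.mp hk)
          exact le_trans (by exact_mod_cast this) hp
        have := pow_mul_exp_le k w |x| hw (abs_nonneg x) hk'
        rwa [sq_abs] at this
    _ ≤ (3*w)^p := gaussPoly_wsum_le w hw p hp

lemma maxDerivSup_gauss_le (m : ℕ) (hm : 1 ≤ m) :
    maxDerivSup (fun t : ℝ => Real.exp (-t ^ 2)) m ≤ (18 * (m:ℝ)) ^ m := by
  set w : ℝ := Real.sqrt (2 * m) with hw_def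
  have h2m : (1:ℝ) ≤ 2 * m := by exact_mod_cast Nat.one_le_iff_ne_zero.mpr (by omega)
  have hw : 1 ≤ w := by
    rw [hw_def, show (1:ℝ) = Real.sqrt 1 by simp]
    exact Real.sqrt_le_sqrt h2m
  have hw0 : (0:ℝ) < w := lt_of_lt_of_le zero_lt_one hw
  have hw2 : w ^ 2 = 2 * m := Real.sq_sqrt (by linarith)
  have key : ∀ p, p ∈ Finset.range (2*m+1) →
      (⨆ b : ℝ, |iteratedDeriv p (fun t : ℝ => Real.exp (-t ^ 2)) b|) ≤ (3*w)^(2*m) := by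
    intro p hp
    have hp' : p ≤ 2*m := Nat.lt_succ_iff.mp (Finset.mem_range.mp hp)
    apply ciSup_le
    intro b
    refine le_trans (iteratedDeriv_gauss_bound w hw p (by rw [hw2]; exact_mod_cast hp') b) ?_
    exact pow_le_pow_right₀ (by linarith) hp'
  refine le_trans (Finset.sup'_le _ _ key) (le_of_eq ?_)
  rw [pow_mul, show (3*w)^2 = 9 * w^2 by ring, hw2]
  ring_nf

lemma one_le_maxDerivSup_gauss (m : ℕ) :
    1 ≤ maxDerivSup (fun t : ℝ => Real.exp (-t ^ 2)) m := by
  have h0 : (0:ℕ) ∈ Finset.range (2*m+1) := Finset.mem_range.mpr (by omega)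
  refine le_trans ?_ (Finset.le_sup' _ h0)
  have hb : BddAbove (Set.range fun b : ℝ =>
      |iteratedDeriv 0 (fun t : ℝ => Real.exp (-t ^ 2)) b|) := by
    refine ⟨1, ?_⟩
    rintro y ⟨b, rfl⟩
    simp only [iteratedDeriv_zero]
    rw [abs_of_pos (Real.exp_pos _)]
    rw [Real.exp_le_one_iff]
    simpa using neg_nonpos.mpr (sq_nonneg b)
  have := le_ciSup hb (0:ℝ)
  simpa [iteratedDeriv_zero] using this

lemma main_ineq (δ : ℝ) (hδ : 0 < δ) (m : ℕ) (hm : 34 ≤ m) :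
    1 * (m : ℝ) ^ (-(1 : ℝ) / 2) * (3 * Real.exp 1 / (2 * δ)) ^ (2 * m) *
        maxDerivSup (fun t : ℝ => Real.exp (-t ^ 2)) m ≤ (3 * (m : ℝ) / δ) ^ (2 * m) := by
  set e := Real.exp 1 with he_def
  have he : (0:ℝ) < e := Real.exp_pos 1
  have he9 : e < 2.7182818286 := Real.exp_one_lt_d9
  set M := maxDerivSup (fun t : ℝ => Real.exp (-t ^ 2)) m with hM_def
  have hM1 : 1 ≤ M := one_le_maxDerivSup_gauss m
  have hMle : M ≤ (18 * (m:ℝ))^m := maxDerivSup_gauss_le m (by omega)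
  have hm1 : (1:ℝ) ≤ (m:ℝ) := by exact_mod_cast (by omega : 1 ≤ m)
  have hm34 : (34:ℝ) ≤ (m:ℝ) := by exact_mod_cast hm
  have hx : (m:ℝ) ^ (-(1:ℝ)/2) ≤ 1 :=
    Real.rpow_le_one_of_one_le_of_nonpos hm1 (by norm_num)
  have hx0 : (0:ℝ) ≤ (m:ℝ) ^ (-(1:ℝ)/2) := Real.rpow_nonneg (by linarith) _
  have hr0 : 0 < 3 * e / (2 * δ) := by positivity
  have step1 : 1 * (m:ℝ)^(-(1:ℝ)/2) * (3*e/(2*δ))^(2*m) * M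
      ≤ (3*e/(2*δ))^(2*m) * (18*(m:ℝ))^m := by
    have h1 : (m:ℝ)^(-(1:ℝ)/2) * (3*e/(2*δ))^(2*m) ≤ 1 * (3*e/(2*δ))^(2*m) :=
      mul_le_mul_of_nonneg_right hx (pow_nonneg hr0.le _)
    have h2 : (m:ℝ)^(-(1:ℝ)/2) * (3*e/(2*δ))^(2*m) * M
        ≤ (1 * (3*e/(2*δ))^(2*m)) * (18*(m:ℝ))^m :=
      mul_le_mul h1 hMle (by linarith) (by positivity)
    calc 1 * (m:ℝ)^(-(1:ℝ)/2) * (3*e/(2*δ))^(2*m) * M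
        = (m:ℝ)^(-(1:ℝ)/2) * (3*e/(2*δ))^(2*m) * M := by ring
      _ ≤ (1 * (3*e/(2*δ))^(2*m)) * (18*(m:ℝ))^m := h2
      _ = (3*e/(2*δ))^(2*m) * (18*(m:ℝ))^m := by ring
  have hee : e * e ≤ 7.38905610 := by
    have h := mul_le_mul he9.le he9.le he.le (by norm_num : (0:ℝ) ≤ 2.7182818286)
    nlinarith
  have step2 : (18*(m:ℝ))^m ≤ ((2*(m:ℝ)/e)^2)^m := by
    apply pow_le_pow_left₀ (by positivity)
    rw [div_pow, le_div_iff₀ (by positivity)]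
    nlinarith [hee, hm34, hm1]
  have step3 : (3*e/(2*δ))^(2*m) * ((2*(m:ℝ)/e)^2)^m = (3*(m:ℝ)/δ)^(2*m) := by
    rw [← pow_mul, ← mul_pow]
    congr 1
    field_simp
  calc 1 * (m:ℝ)^(-(1:ℝ)/2) * (3*e/(2*δ))^(2*m) * M
      ≤ (3*e/(2*δ))^(2*m) * (18*(m:ℝ))^m := step1
    _ ≤ (3*e/(2*δ))^(2*m) * ((2*(m:ℝ)/e)^2)^m :=
        mul_le_mul_of_nonneg_left step2 (pow_nonneg hr0.le _)
    _ = (3*(m:ℝ)/δ)^(2*m) := step3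


/-- For the Gaussian activation `φ(x) = exp(-x²)` and any `δ > 0`:
`(3m/δ)^{2m} ≥ C m^{-1/2} (3e/(2δ))^{2m} · max_{0 ≤ p ≤ 2m} sup_b |φ^{(p)}(b)|`
eventually in `m`; in particular for `0 < δ < 3e/2` the quotient
`(3m/δ)^{2m} / max_{0 ≤ p ≤ 2m} sup_b |φ^{(p)}(b)|` grows at least exponentially. -/
theorem gaussian_parameter_lower_bound (δ : ℝ) (hδ : 0 < δ) :
    (∃ C : ℝ, 0 < C ∧ ∃ m₀ : ℕ, ∀ m : ℕ, m₀ ≤ m →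
      C * (m : ℝ) ^ (-(1 : ℝ) / 2) * (3 * Real.exp 1 / (2 * δ)) ^ (2 * m) *
          maxDerivSup (fun t : ℝ => Real.exp (-t ^ 2)) m
        ≤ (3 * (m : ℝ) / δ) ^ (2 * m)) ∧
    (δ < 3 * Real.exp 1 / 2 →
      ∃ ρ : ℝ, 1 < ρ ∧ ∃ C' : ℝ, 0 < C' ∧ ∃ m₀ : ℕ, ∀ m : ℕ, m₀ ≤ m →
        C' * ρ ^ m ≤ (3 * (m : ℝ) / δ) ^ (2 * m) /
          maxDerivSup (fun t : ℝ => Real.exp (-t ^ 2)) m) := by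
  constructor
  · exact ⟨1, one_pos, 34, fun m hm => main_ineq δ hδ m hm⟩
  · intro hδ2
    set e := Real.exp 1 with he_def
    have he : (0:ℝ) < e := Real.exp_pos 1
    set r : ℝ := 3 * e / (2 * δ) with hr_def
    have hr1 : 1 < r := by
      rw [hr_def, lt_div_iff₀ (by positivity)]
      linarith
    have hr0 : 0 < r := lt_trans one_pos hr1
    refine ⟨r, hr1, 1, one_pos, max 34 (Nat.ceil ((1/(r-1))^2) + 1), fun m hm => ?_⟩
    have hm34 : 34 ≤ m := le_trans (le_max_left _ _) hm
    have hmc : Nat.ceil ((1/(r-1))^2) + 1 ≤ m := le_trans (le_max_right _ _) hm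
    have hm0 : (0:ℝ) < (m:ℝ) := by exact_mod_cast (by omega : 0 < m)
    have hm1 : (1:ℝ) ≤ (m:ℝ) := by exact_mod_cast (by omega : 1 ≤ m)
    set M := maxDerivSup (fun t : ℝ => Real.exp (-t ^ 2)) m with hM_def
    have hM1 : 1 ≤ M := one_le_maxDerivSup_gauss m
    have hM0 : 0 < M := lt_of_lt_of_le one_pos hM1
    have main := main_ineq δ hδ m hm34
    -- √m ≥ 1/(r-1)
    have hrm : (0:ℝ) < r - 1 := by linarith
    have hsm : 0 < Real.sqrt m := Real.sqrt_pos.mpr hm0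
    have hceil : ((1/(r-1))^2 : ℝ) ≤ (m:ℝ) := by
      have : ((1/(r-1))^2 : ℝ) ≤ (Nat.ceil ((1/(r-1))^2) : ℝ) := Nat.le_ceil _
      have h2 : (Nat.ceil ((1/(r-1))^2) : ℝ) ≤ (m:ℝ) := by exact_mod_cast (by omega : Nat.ceil ((1/(r-1))^2) ≤ m)
      linarith
    have hsq : 1/(r-1) ≤ Real.sqrt m := by
      rw [show (1/(r-1)) = Real.sqrt ((1/(r-1))^2) by rw [Real.sqrt_sq (by positivity)]]
      exact Real.sqrt_le_sqrt hceil
    -- √m ≤ r^m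
    have hbern : 1 + (m:ℝ) * (r-1) ≤ r^m := by
      have := one_add_mul_le_pow (show (-2:ℝ) ≤ r - 1 by linarith) m
      simpa using this
    have hsqm : Real.sqrt m ≤ r^m := by
      have h1 : (Real.sqrt m) * (Real.sqrt m) = (m:ℝ) := Real.mul_self_sqrt hm0.le
      have h2 : 1 ≤ Real.sqrt m * (r-1) := by
        rw [div_le_iff₀ hrm] at hsq
        linarith
      nlinarith [mul_le_mul_of_nonneg_left h2 hsm.le]
    -- conclude
    rw [one_mul, le_div_iff₀ hM0]
    have hx_eq : (m:ℝ)^(-(1:ℝ)/2) = (Real.sqrt m)⁻¹ := by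
      rw [show (-(1:ℝ)/2) = -(1/2 : ℝ) by norm_num, Real.rpow_neg hm0.le,
        Real.sqrt_eq_rpow]
    have hrm_pos : (0:ℝ) < r ^ m := pow_pos hr0 m
    have key : r^m ≤ (m:ℝ)^(-(1:ℝ)/2) * r^(2*m) := by
      rw [hx_eq, two_mul, pow_add]
      rw [inv_mul_eq_div, le_div_iff₀ hsm]
      calc r^m * Real.sqrt m ≤ r^m * r^m :=
          mul_le_mul_of_nonneg_left hsqm hrm_pos.le
        _ = r^m * r^m := rfl
    calc r^m * M ≤ ((m:ℝ)^(-(1:ℝ)/2) * r^(2*m)) * M :=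
        mul_le_mul_of_nonneg_right key hM0.le
      _ = 1 * (m:ℝ)^(-(1:ℝ)/2) * r^(2*m) * M := by ring
      _ ≤ (3*(m:ℝ)/δ)^(2*m) := main
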